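/- arXiv:2102.02739 — 2 statements merged into one kernel-verified Lean document; each statement's English description precedes it below -/
import Mathlib

section
/- For every n ≥ 1 and every x with 0 ≤ x ≤ n−1, if there exists a divisor h of x such that (2x+1) divides (2n−2h+1), then F(n, n−x) = 1, i.e., the pair (n, n−x) is reachable from (1,1) under the maps Ĝ(x,y)=(x+y,y) and Ŝ(x,y)=(3x−2y+1,2x−y+1). (For x = 0 take h = 0 with the convention that the condition holds and (n,n) is reachable.) -/
def Ghat (p : ℤ × ℤ) : ℤ × ℤ := (p.1 + p.2, p.2)

def Shat (p : ℤ × ℤ) : ℤ × ℤ := (3 * p.1 - 2 * p.2 + 1, 2 * p.1 - p.2 + 1)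

def applyWord (w : List Bool) (p : ℤ × ℤ) : ℤ × ℤ :=
  w.foldr (fun b q => if b then Shat q else Ghat q) p

def Reachable (p : ℤ × ℤ) : Prop := ∃ w : List Bool, applyWord w (1, 1) = p

lemma applyWord_append (w1 w2 : List Bool) (p : ℤ × ℤ) :
    applyWord (w1 ++ w2) p = applyWord w1 (applyWord w2 p) := by
  simp [applyWord, List.foldr_append]

lemma Spow_diag (k : ℕ) (a : ℤ) :
    applyWord (List.replicate k true) (a, a) = (a + k, a + k) := by
  induction k with
  | zero => simp [applyWord]
  | succ k ih =>
      rw [List.replicate_succ]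
      simp only [applyWord, List.foldr_cons] at ih ⊢
      rw [ih]
      simp [Shat]
      constructor <;> push_cast <;> ring

lemma Gpow (m : ℕ) (a b : ℤ) :
    applyWord (List.replicate m false) (a, b) = (a + m * b, b) := by
  induction m with
  | zero => simp [applyWord]
  | succ m ih =>
      rw [List.replicate_succ]
      simp only [applyWord, List.foldr_cons] at ih ⊢
      rw [ih]
      simp [Ghat]
      push_cast
      ring

lemma Spow (s : ℕ) (b x : ℤ) :
    applyWord (List.replicate s true) (b + x, b) =
      (b + s * (2 * x + 1) + x, b + s * (2 * x + 1)) := by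
  induction s with
  | zero => simp [applyWord]
  | succ s ih =>
      rw [List.replicate_succ]
      simp only [applyWord, List.foldr_cons] at ih ⊢
      rw [ih]
      simp [Shat]
      constructor <;> push_cast <;> ring

theorem divisor_condition_reachable (n x : ℤ) (hn : 1 ≤ n) (hx : 0 ≤ x) (hxn : x ≤ n - 1)
    (h : ∃ h : ℤ, 0 ≤ h ∧ h ∣ x ∧ (2 * x + 1) ∣ (2 * n - 2 * h + 1)) :
    Reachable (n, n - x) := by
  obtain ⟨h, hh0, hdvd, hdvd2⟩ := h
  by_cases hx0 : x = 0
  · subst hx0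
    refine ⟨List.replicate (n - 1).toNat true, ?_⟩
    rw [Spow_diag]
    rw [Int.toNat_of_nonneg (by linarith)]
    norm_num
  · have hx1 : 1 ≤ x := lt_of_le_of_ne hx (Ne.symm hx0)
    have hh1 : 1 ≤ h := by
      rcases eq_or_lt_of_le hh0 with he | hl
      · exfalso; rw [← he] at hdvd; simp at hdvd; exact hx0 hdvd
      · exact hl
    have hhx : h ≤ x := Int.le_of_dvd (by linarith) hdvd
    obtain ⟨m, hm⟩ := hdvd
    obtain ⟨t, ht⟩ := hdvd2
    have hm1 : 1 ≤ m := by nlinarith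
    have ht1 : 1 ≤ t := by nlinarith
    have hodd : Odd t := by
      have : Odd ((2 * x + 1) * t) := by
        rw [← ht]; exact ⟨n - h, by ring⟩
      exact ((Int.odd_mul).mp this).2
    obtain ⟨s, hs⟩ := hodd
    have hs0 : 0 ≤ s := by omega
    refine ⟨List.replicate s.toNat true ++ List.replicate m.toNat false ++
      List.replicate (h - 1).toNat true, ?_⟩
    rw [applyWord_append, applyWord_append, Spow_diag,
      Int.toNat_of_nonneg (by linarith)]
    have e1 : (1 : ℤ) + (h - 1) = h := by ring
    rw [e1, Gpow, Int.toNat_of_nonneg (by linarith)]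
    have e2 : h + m * h = h + x := by rw [hm]; ring
    rw [e2]
    have e3 : (h + x, h) = ((h : ℤ) + x, h) := rfl
    rw [show ((h : ℤ) + x, h) = (h + x, h) from rfl, Spow,
      Int.toNat_of_nonneg hs0]
    have hn' : n = h + s * (2 * x + 1) + x := by nlinarith
    rw [Prod.mk.injEq]
    constructor <;> linarith
end

section
/- For each natural number a ≥ 1, the a-th subdiagonal of the reachability matrix is periodic with period 2a+1: for all n > a, whether (n, n−a) is reachable from (1,1) under the maps Ĝ(x,y)=(x+y,y) and Ŝ(x,y)=(3x−2y+1,2x−y+1) depends only on n mod (2a+1); i.e., (n, n−a) is reachable iff (n + 2a+1, n+a+1) is reachable. -/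
lemma applyWord_cons (b : Bool) (w : List Bool) (p : ℤ × ℤ) :
    applyWord (b :: w) p = if b then Shat (applyWord w p) else Ghat (applyWord w p) := rfl

lemma reach_bounds (w : List Bool) :
    1 ≤ (applyWord w (1, 1)).2 ∧ (applyWord w (1, 1)).2 ≤ (applyWord w (1, 1)).1 := by
  induction w with
  | nil => simp [applyWord]
  | cons b w ih =>
    obtain ⟨h1, h2⟩ := ih
    cases b <;> simp only [applyWord, List.foldr_cons, if_true, if_false,
      Bool.false_eq_true, Ghat, Shat] at * <;> omega

theorem subdiagonal_periodic (a n : ℤ) (ha : 1 ≤ a) (han : a < n) :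
    Reachable (n, n - a) ↔ Reachable (n + (2 * a + 1), n + a + 1) := by
  constructor
  · rintro ⟨w, hw⟩
    refine ⟨true :: w, ?_⟩
    simp only [applyWord, List.foldr_cons, if_true] at *
    rw [hw]
    simp only [Shat, Prod.mk.injEq]
    constructor <;> ring
  · rintro ⟨w, hw⟩
    rcases w with _ | ⟨b, w⟩
    · simp [applyWord, Prod.ext_iff] at hw
      omega
    · have hb := reach_bounds w
      rw [applyWord_cons] at hw
      cases b
      · simp only [Bool.false_eq_true, if_false, Ghat, Prod.ext_iff] at hw
        omega
      · simp only [if_true, Shat, Prod.ext_iff] at hw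
        refine ⟨w, Prod.ext ?_ ?_⟩ <;> omega
end
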